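/- Let P ≥ 1 be an integer and let x be a P-power-free infinite word over a finite alphabet. Then for every nonempty factor u of x and every factor v of x, the number of occurrences of u in v satisfies |v|_u ≤ P·|v| / |u|. -/
import Mathlib


open scoped Classical

section Core

variable {A : Type*} {B : Type*}

/-- `w` occurs at position `i` of the infinite word `x`. -/
def OccursAt (x : ℕ → A) (w : List A) (i : ℕ) : Prop :=
  w = (List.range w.length).map fun j => x (i + j)

/-- `w` is a factor of the infinite word `x`. -/
def IsFactor (x : ℕ → A) (w : List A) : Prop := ∃ i, OccursAt x w i

/-- The number of (possibly overlapping) occurrences of `w` in the finite word `u`,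
i.e. `|u|_w`. -/
noncomputable def countOccs (u w : List A) : ℕ :=
  ((Finset.range (u.length + 1)).filter fun i => w <+: u.drop i).card

/-- The finite word `w` is `C`-balanced in the infinite word `x`. -/
def BalancedIn (C : ℝ) (w : List A) (x : ℕ → A) : Prop :=
  ∀ u v : List A, IsFactor x u → IsFactor x v → u.length = v.length →
    |(countOccs u w : ℝ) - (countOccs v w : ℝ)| ≤ C

/-- Every finite word is `C_w`-balanced in `x` for some constant `C_w > 0`. -/
def FactorBalanced (x : ℕ → A) : Prop :=
  ∀ w : List A, ∃ C : ℝ, 0 < C ∧ BalancedIn C w x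

/-- There is a single constant `C > 0` such that every finite word is `C`-balanced in `x`. -/
def UniformlyFactorBalanced (x : ℕ → A) : Prop :=
  ∃ C : ℝ, 0 < C ∧ ∀ w : List A, BalancedIn C w x

/-- Every letter is `C`-balanced in `x`. -/
def LetterBalanced (C : ℝ) (x : ℕ → A) : Prop :=
  ∀ a : A, BalancedIn C [a] x

/-- `x` is `P`-power-free: no factor of `x` is a `P`-th power of a nonempty word. -/
def PowerFree (P : ℕ) (x : ℕ → A) : Prop :=
  ∀ v : List A, v ≠ [] → ¬ IsFactor x (List.flatten (List.replicate P v))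

/-- The length-`n` prefix of the infinite word `x`. -/
def wordPrefix (x : ℕ → A) (n : ℕ) : List A := (List.range n).map x

/-- The extension of a substitution to finite words. -/
def substWord (τ : A → List B) (w : List A) : List B := (w.map τ).flatten

/-- The word `w` has (prefix) frequency `μ` in `x`. -/
def HasFreq (x : ℕ → A) (w : List A) (μ : ℝ) : Prop :=
  Filter.Tendsto (fun n => (countOccs (wordPrefix x n) w : ℝ) / n)
    Filter.atTop (nhds μ)

/-- `τ` is `k`-decisive in `x` with witness map `r` (each `r a` of length `k ≥ 1`,
and `τ b` starts with `r a` whenever `ab` is a factor of `x`). -/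
def DecisiveWith (τ : A → List B) (x : ℕ → A) (r : A → List B) (k : ℕ) : Prop :=
  1 ≤ k ∧ (∀ a, (r a).length = k) ∧
    ∀ a b : A, IsFactor x [a, b] → r a <+: τ b

/-- `τ` is `k`-decisive in `x`. -/
def Decisive (τ : A → List B) (x : ℕ → A) (k : ℕ) : Prop :=
  ∃ r : A → List B, DecisiveWith τ x r k

/-- The image of the infinite word `x` under the substitution `τ`: when the images of
prefixes of `x` have unbounded length, `substInf τ x` is the infinite word `τ(x)`. -/
noncomputable def substInf [Nonempty B] (τ : A → List B) (x : ℕ → A) (j : ℕ) : B :=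
  if h : ∃ n, j < (substWord τ (wordPrefix x n)).length
  then (substWord τ (wordPrefix x (Nat.find h))).get ⟨j, Nat.find_spec h⟩
  else Classical.arbitrary B

/-- Iterates of a substitution: `substIter τ n a = τ^n(a)` as a finite word. -/
def substIter (τ : A → List A) : ℕ → A → List A
  | 0, a => [a]
  | n+1, a => substWord (substIter τ n) (τ a)

/-- `τ` is prolongable on the letter `a`. -/
def Prolongable (τ : A → List A) (a : A) : Prop :=
  (τ a).head? = some a ∧ (∀ b, τ b ≠ []) ∧
    Filter.Tendsto (fun n => (substIter τ n a).length) Filter.atTop Filter.atTop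

/-- The fixed point `τ^ω(a)` of a substitution prolongable on `a`:
the limit of the prefix chain `τ^n(a)`. -/
noncomputable def fixedPoint (τ : A → List A) (a : A) (j : ℕ) : A :=
  if h : ∃ n, j < (substIter τ n a).length
  then (substIter τ (Nat.find h) a).get ⟨j, Nat.find_spec h⟩
  else a

/-- The factor complexity of `x`: the number of distinct length-`n` factors. -/
noncomputable def complexity (x : ℕ → A) (n : ℕ) : ℕ :=
  Set.ncard {w : List A | w.length = n ∧ IsFactor x w}

/-- Every factor of `x` occurs infinitely often in `x`. -/
def Recurrent (x : ℕ → A) : Prop :=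
  ∀ w : List A, IsFactor x w → ∀ N : ℕ, ∃ i, N ≤ i ∧ OccursAt x w i

/-- For every factor `w` of `x` there is `k` such that `w` occurs in
every length-`k` factor of `x`. -/
def UniformlyRecurrent (x : ℕ → A) : Prop :=
  ∀ w : List A, IsFactor x w → ∃ k : ℕ, ∀ v : List A, IsFactor x v →
    v.length = k → 1 ≤ countOccs v w

end Core

section Aux

variable {A : Type*}

lemma occursAt_getElem {x : ℕ → A} {w : List A} {i : ℕ} (h : OccursAt x w i)
    {t : ℕ} (ht : t < w.length) : w[t] = x (i + t) := by
  conv_lhs => rw [List.getElem_of_eq h ht]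
  simp

lemma occursAt_of_getElem {x : ℕ → A} {w : List A} {i : ℕ}
    (h : ∀ t (ht : t < w.length), w[t] = x (i + t)) : OccursAt x w i := by
  apply List.ext_getElem (by simp)
  intro t h1 h2
  simpa using h t h1

lemma occursAt_append {x : ℕ → A} {w z : List A} {i : ℕ}
    (hw : OccursAt x w i) (hz : OccursAt x z (i + w.length)) :
    OccursAt x (w ++ z) i := by
  apply occursAt_of_getElem
  intro t ht
  rcases lt_or_ge t w.length with h | h
  · rw [List.getElem_append_left h]
    exact occursAt_getElem hw h
  · rw [List.getElem_append_right h,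
      occursAt_getElem hz (by simp at ht ⊢; omega)]
    congr 1
    omega

lemma occursAt_of_prefix {x : ℕ → A} {v u : List A} {q i : ℕ}
    (hv : OccursAt x v q) (h : u <+: v.drop i) : OccursAt x u (q + i) := by
  have hlen : u.length ≤ v.length - i := by simpa using h.length_le
  apply occursAt_of_getElem
  intro t ht
  have h1 : u[t] = (v.drop i)[t]'(by simpa using by omega) := h.getElem ht
  rw [h1, List.getElem_drop, occursAt_getElem hv (by omega)]
  congr 1
  omega

lemma gap_lemma {P : ℕ} (hP2 : 2 ≤ P) {x : ℕ → A} (hpf : PowerFree P x)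
    {u : List A} {p d : ℕ} (hd : 0 < d)
    (h1 : OccursAt x u p) (h2 : OccursAt x u (p + d)) :
    u.length < (P - 1) * d := by
  by_contra hle
  push_neg at hle
  set n := u.length with hn
  have hper : ∀ s, s < n → x (p + d + s) = x (p + s) := by
    intro s hs
    rw [← occursAt_getElem h1 hs, ← occursAt_getElem h2 hs]
  have hper' : ∀ m t, m * d + t < n + d → x (p + (m * d + t)) = x (p + t) := by
    intro m
    induction m with
    | zero => simp
    | succ m ih =>
      intro t hmt
      rw [Nat.succ_mul] at hmt
      have hlt : m * d + t < n := by omega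
      have e1 : x (p + ((m + 1) * d + t)) = x (p + d + (m * d + t)) := by
        congr 1
        rw [Nat.succ_mul]
        omega
      rw [e1, hper _ hlt, ih t (by omega)]
  set w := (List.range d).map (fun j => x (p + j)) with hw
  have hwlen : w.length = d := by simp [hw]
  have hocc : ∀ m, m ≤ P - 1 → OccursAt x w (p + m * d) := by
    intro m hm
    apply occursAt_of_getElem
    intro t ht
    rw [hwlen] at ht
    have e1 : w[t]'(by rw [hwlen]; exact ht) = x (p + t) := by simp [hw]
    have hmd : m * d ≤ (P - 1) * d := Nat.mul_le_mul_right _ hm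
    rw [e1, ← hper' m t (by omega)]
    congr 1
    omega
  have hpow : ∀ k, k ≤ P → OccursAt x (List.flatten (List.replicate k w)) p := by
    intro k hk
    induction k with
    | zero =>
      show _ = _
      simp
    | succ k ih =>
      rw [List.replicate_succ', List.flatten_append]
      have hlen : (List.flatten (List.replicate k w)).length = k * d := by
        simp [hwlen, Nat.mul_comm]
      refine occursAt_append (ih (by omega)) ?_
      rw [hlen]
      simpa using hocc k (by omega)
  exact hpf w (by
      intro h
      rw [h] at hwlen
      simp at hwlen
      omega) ⟨p, hpow P le_rfl⟩

end Aux

/-- Lemma: in a `P`-power-free word `x`, any nonempty factor `u` occurs at most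
`P·|v|/|u|` times in any factor `v`. -/
theorem stmt12 {A : Type*} [Fintype A] (P : ℕ) (hP : 1 ≤ P) (x : ℕ → A)
    (hpf : PowerFree P x) (u v : List A) (hu : u ≠ [])
    (hfu : IsFactor x u) (hfv : IsFactor x v) :
    (countOccs v u : ℝ) ≤ (P : ℝ) * (v.length : ℝ) / (u.length : ℝ) := by
  rcases eq_or_lt_of_le hP with h1 | hP2
  · exfalso
    refine hpf [x 0] (by simp) ⟨0, ?_⟩
    rw [← h1]
    show _ = _
    simp [List.range_succ]
  have hn : 0 < u.length := List.length_pos_iff.mpr hu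
  set n := u.length with hndef
  set S := (Finset.range (v.length + 1)).filter (fun i => u <+: v.drop i) with hS
  have hcount : countOccs v u = S.card := rfl
  obtain ⟨q, hq⟩ := hfv
  rcases Nat.eq_zero_or_pos S.card with hc0 | hc1
  · rw [hcount, hc0]
    push_cast
    positivity
  -- basic facts about members of S
  have hmem : ∀ i ∈ S, u <+: v.drop i := by
    intro i hi
    rw [hS, Finset.mem_filter] at hi
    exact hi.2
  have hiub : ∀ i ∈ S, i + n ≤ v.length := by
    intro i hi
    have := (hmem i hi).length_le
    simp only [List.length_drop] at this
    omega
  have hocc : ∀ i ∈ S, OccursAt x u (q + i) := fun i hi =>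
    occursAt_of_prefix hq (hmem i hi)
  -- minimal gap
  set g := n / (P - 1) + 1 with hg
  have hgpos : 0 < g := Nat.succ_pos _
  have hgap : ∀ i ∈ S, ∀ j ∈ S, i < j → g ≤ j - i := by
    intro i hi j hj hij
    have hd : 0 < j - i := by omega
    have h2 : OccursAt x u (q + i + (j - i)) := by
      have e : q + i + (j - i) = q + j := by omega
      rw [e]
      exact hocc j hj
    have hlt : n < (P - 1) * (j - i) := gap_lemma hP2 hpf hd (hocc i hi) h2
    have : n / (P - 1) < j - i := by
      rw [Nat.div_lt_iff_lt_mul (by omega)]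
      exact hlt.trans_le (Nat.mul_comm _ _).le
    omega
  -- injective division map
  set L := v.length - n with hL
  have himg : ∀ i ∈ S, i / g ∈ Finset.range (L / g + 1) := by
    intro i hi
    rw [Finset.mem_range]
    have : i ≤ L := by have := hiub i hi; omega
    have := Nat.div_le_div_right (c := g) this
    omega
  have hinj : Set.InjOn (fun i => i / g) S := by
    intro i hi j hj hij
    rw [Finset.mem_coe] at hi hj
    by_contra hne
    wlog hlt : i < j generalizing i j
    · exact this hj hi hij.symm (Ne.symm hne) (by omega)
    have hgle : g ≤ j - i := hgap i hi j hj hlt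
    have hij' : i / g = j / g := hij
    have : i / g < j / g := by
      have : (i + g) / g ≤ j / g := Nat.div_le_div_right (by omega)
      rw [Nat.add_div_right _ hgpos] at this
      omega
    omega
  have hcard : S.card ≤ L / g + 1 := by
    calc S.card = (S.image (fun i => i / g)).card :=
          (Finset.card_image_of_injOn hinj).symm
      _ ≤ (Finset.range (L / g + 1)).card := by
          apply Finset.card_le_card
          intro m hm
          obtain ⟨i, hi, rfl⟩ := Finset.mem_image.mp hm
          exact himg i hi
      _ = L / g + 1 := Finset.card_range _
  -- n ≤ v.length
  obtain ⟨i0, hi0⟩ := Finset.card_pos.mp hc1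
  have hnv : n ≤ v.length := by have := hiub i0 hi0; omega
  -- key nat inequality
  have hkey : S.card * n ≤ P * v.length := by
    set c := S.card with hc
    have hc1' : 1 ≤ c := hc1
    have hstep1 : (c - 1) * g ≤ L := by
      have : c - 1 ≤ L / g := by omega
      exact (Nat.le_div_iff_mul_le hgpos).mp this
    have hstep2 : n < g * (P - 1) := by
      rw [← Nat.div_lt_iff_lt_mul (by omega)]
      omega
    calc c * n = (c - 1) * n + n := by
          rw [Nat.sub_one_mul]
          have : n ≤ c * n := Nat.le_mul_of_pos_left _ hc1'
          omega
      _ ≤ (c - 1) * (g * (P - 1)) + v.length := by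
          gcongr <;> omega
      _ = ((c - 1) * g) * (P - 1) + v.length := by ring
      _ ≤ L * (P - 1) + v.length := by gcongr
      _ ≤ v.length * (P - 1) + v.length := by
          gcongr
          omega
      _ = v.length * P := by
          rw [Nat.mul_sub_one]
          have : v.length ≤ v.length * P := Nat.le_mul_of_pos_right _ (by omega)
          omega
      _ = P * v.length := Nat.mul_comm _ _
  rw [hcount, le_div_iff₀ (by exact_mod_cast hn)]
  exact_mod_cast hkey
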